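/- arXiv:1010.1768 — 3 statements merged into one kernel-verified Lean document; each statement's English description precedes it below -/
import Mathlib

section
/- Let N = 4, Q(r) = (1+r²/8)^{-1}, Λf = f + rf', Df = 2f + rf', Φ = DΛQ, and (f,g) = ∫₀^∞ f g r³ dr. Then (Φ, ΛQ) = (1/2) lim_{y→∞} y⁴ |ΛQ(y)|² = 32. -/
open Real MeasureTheory Set Filter

set_option maxHeartbeats 1000000

noncomputable def Fpoh (r : ℝ) : ℝ := 32 * r ^ 4 * (8 - r ^ 2) ^ 2 / (8 + r ^ 2) ^ 4

lemma den_pos (r : ℝ) : (0:ℝ) < 8 + r ^ 2 := by positivity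

lemma hasDerivAt_Fpoh (r : ℝ) :
    HasDerivAt Fpoh (1024 * (8 - 3 * r ^ 2) * (8 - r ^ 2) * r ^ 3 / (8 + r ^ 2) ^ 5) r := by
  have hb : HasDerivAt (fun x : ℝ => 8 - x ^ 2) (-(2 * r)) r := by
    simpa using (hasDerivAt_pow 2 r).const_sub 8
  have hn : HasDerivAt (fun x : ℝ => 32 * x ^ 4 * (8 - x ^ 2) ^ 2)
      (32 * (4 * r ^ 3) * (8 - r ^ 2) ^ 2 +
        32 * r ^ 4 * (2 * (8 - r ^ 2) * (-(2 * r)))) r := by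
    have h1 : HasDerivAt (fun x : ℝ => 32 * x ^ 4) (32 * (4 * r ^ 3)) r := by
      simpa using (hasDerivAt_pow 4 r).const_mul 32
    have h2 : HasDerivAt (fun x : ℝ => (8 - x ^ 2) ^ 2) (2 * (8 - r ^ 2) * (-(2 * r))) r := by
      simpa [mul_comm, mul_assoc] using hb.fun_pow 2
    simpa using h1.fun_mul h2
  have hd : HasDerivAt (fun x : ℝ => (8 + x ^ 2) ^ 4) (4 * (8 + r ^ 2) ^ 3 * (2 * r)) r := by
    have h1 : HasDerivAt (fun x : ℝ => 8 + x ^ 2) (2 * r) r := by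
      simpa using (hasDerivAt_pow 2 r).const_add 8
    simpa [mul_comm, mul_assoc] using h1.fun_pow 4
  have := hn.fun_div hd (by positivity)
  refine this.congr_deriv ?_
  have h0 : (8 + r ^ 2) ≠ 0 := (den_pos r).ne'
  field_simp
  ring

lemma tendsto_Fpoh : Tendsto Fpoh atTop (nhds 32) := by
  have hu : Tendsto (fun r : ℝ => 8 / r ^ 2) atTop (nhds 0) := by
    simpa [div_eq_mul_inv] using (tendsto_pow_atTop (two_ne_zero)).inv_tendsto_atTop.const_mul (8:ℝ)
  have hG : ContinuousAt (fun t : ℝ => 32 * (t - 1) ^ 2 / (t + 1) ^ 4) 0 := by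
    apply ContinuousAt.div
    · fun_prop
    · fun_prop
    · norm_num
  have h := (hG.tendsto.comp hu)
  norm_num at h
  refine h.congr' ?_
  filter_upwards [eventually_gt_atTop (0:ℝ)] with r hr
  have hr2 : r ^ 2 ≠ 0 := by positivity
  have h0 : (8 + r ^ 2) ≠ 0 := (den_pos r).ne'
  simp only [Function.comp, Fpoh]
  field_simp

/-- In dimension `N = 4`, with `Q(r) = (1+r²/8)⁻¹`, `ΛQ = Q + r Q'`,
`Φ = DΛQ = 2ΛQ + r (ΛQ)'` and `(f,g) = ∫₀^∞ f g r³ dr`, the Pohozaev flux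
identity holds: `(Φ, ΛQ) = (1/2) lim_{y→∞} y⁴ |ΛQ(y)|² = 32`. -/
theorem stmt_6 (Q ΛQ Φ : ℝ → ℝ)
    (hQ : ∀ r : ℝ, Q r = (1 + r ^ 2 / 8)⁻¹)
    (hΛQ : ∀ r : ℝ, ΛQ r = Q r + r * deriv Q r)
    (hΦ : ∀ r : ℝ, Φ r = 2 * ΛQ r + r * deriv ΛQ r) :
    Tendsto (fun y : ℝ => y ^ 4 * |ΛQ y| ^ 2) atTop (nhds 64) ∧
    (∫ r in Ioi (0:ℝ), Φ r * ΛQ r * r ^ 3) = (1 / 2) * 64 ∧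
    (∫ r in Ioi (0:ℝ), Φ r * ΛQ r * r ^ 3) = 32 := by
  -- explicit formulas
  have hQfun : Q = fun r : ℝ => (1 + r ^ 2 / 8)⁻¹ := funext hQ
  have hQden : ∀ r : ℝ, (1 + r ^ 2 / 8) ≠ 0 := fun r => by positivity
  have hQ' : ∀ r : ℝ, deriv Q r = -(2 * r / 8) / (1 + r ^ 2 / 8) ^ 2 := by
    intro r
    rw [hQfun]
    have h1 : HasDerivAt (fun x : ℝ => 1 + x ^ 2 / 8) (2 * r / 8) r := by
      simpa [div_eq_mul_inv, mul_comm] using ((hasDerivAt_pow 2 r).div_const 8).const_add 1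
    exact (h1.inv (hQden r)).deriv
  have hΛQexp : ∀ r : ℝ, ΛQ r = 8 * (8 - r ^ 2) / (8 + r ^ 2) ^ 2 := by
    intro r
    rw [hΛQ, hQ, hQ']
    have h0 : (8 + r ^ 2) ≠ 0 := (den_pos r).ne'
    field_simp
    ring
  have hΛQfun : ΛQ = fun r : ℝ => 8 * (8 - r ^ 2) / (8 + r ^ 2) ^ 2 := funext hΛQexp
  have hΛQ' : ∀ r : ℝ, deriv ΛQ r = 16 * r * (r ^ 2 - 24) / (8 + r ^ 2) ^ 3 := by
    intro r
    rw [hΛQfun]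
    have h0 : (8 + r ^ 2) ≠ 0 := (den_pos r).ne'
    have hn : HasDerivAt (fun x : ℝ => 8 * (8 - x ^ 2)) (8 * (-(2 * r))) r := by
      simpa using ((hasDerivAt_pow 2 r).const_sub 8).const_mul 8
    have hd : HasDerivAt (fun x : ℝ => (8 + x ^ 2) ^ 2) (2 * (8 + r ^ 2) * (2 * r)) r := by
      have h1 : HasDerivAt (fun x : ℝ => 8 + x ^ 2) (2 * r) r := by
        simpa using (hasDerivAt_pow 2 r).const_add 8
      simpa [mul_comm, mul_assoc] using h1.fun_pow 2
    rw [(hn.fun_div hd (by positivity)).deriv]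
    field_simp
    ring
  have hΦexp : ∀ r : ℝ, Φ r = 128 * (8 - 3 * r ^ 2) / (8 + r ^ 2) ^ 3 := by
    intro r
    rw [hΦ, hΛQexp, hΛQ']
    have h0 : (8 + r ^ 2) ≠ 0 := (den_pos r).ne'
    field_simp
    ring
  -- the integrand
  set f : ℝ → ℝ := fun r => 1024 * (8 - 3 * r ^ 2) * (8 - r ^ 2) * r ^ 3 / (8 + r ^ 2) ^ 5 with hf
  have hint_eq : ∀ r : ℝ, Φ r * ΛQ r * r ^ 3 = f r := by
    intro r
    rw [hΦexp, hΛQexp, hf]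
    have h0 : (8 + r ^ 2) ≠ 0 := (den_pos r).ne'
    field_simp
    ring
  have hfcont : Continuous f := by
    apply Continuous.div
    · fun_prop
    · fun_prop
    · intro r; exact pow_ne_zero _ (den_pos r).ne'
  -- integrability of f on Ioi 0
  have hI1 : IntegrableOn f (Ioc (0:ℝ) 1) := hfcont.integrableOn_Ioc
  have hI2 : IntegrableOn f (Ioi (1:ℝ)) := by
    have hg : IntegrableOn (fun r : ℝ => 3072 * r ^ (-3 : ℝ)) (Ioi 1) :=
      (integrableOn_Ioi_rpow_of_lt (by norm_num) one_pos).const_mul 3072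
    refine hg.mono' hfcont.aestronglyMeasurable.restrict ?_
    filter_upwards [ae_restrict_mem measurableSet_Ioi] with r hr
    have hr1 : (1:ℝ) ≤ r := le_of_lt hr
    have hr0 : (0:ℝ) < r := lt_of_lt_of_le one_pos hr1
    have hrp : r ^ (-3 : ℝ) = (r ^ 3)⁻¹ := by
      rw [rpow_neg hr0.le, ← rpow_natCast r 3]; norm_num
    rw [Real.norm_eq_abs, hrp]
    have h0 : (0:ℝ) < (8 + r ^ 2) ^ 5 := by positivity
    rw [hf, abs_div, abs_of_pos h0, div_le_iff₀ h0]
    have key : |1024 * (8 - 3 * r ^ 2) * (8 - r ^ 2) * r ^ 3| * r ^ 3 ≤ 3072 * (8 + r ^ 2) ^ 5 := by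
      have hb1 : |8 - 3 * r ^ 2| ≤ 3 * (8 + r ^ 2) := by
        rw [abs_le]; constructor <;> nlinarith [sq_nonneg r]
      have hb2 : |8 - r ^ 2| ≤ 8 + r ^ 2 := by
        rw [abs_le]; constructor <;> nlinarith [sq_nonneg r]
      have hb3 : r ^ 6 ≤ (8 + r ^ 2) ^ 3 := by nlinarith [sq_nonneg r, pow_pos hr0 2]
      calc |1024 * (8 - 3 * r ^ 2) * (8 - r ^ 2) * r ^ 3| * r ^ 3
          = 1024 * |8 - 3 * r ^ 2| * |8 - r ^ 2| * r ^ 6 := by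
            rw [abs_mul, abs_mul, abs_mul, abs_of_pos (pow_pos hr0 3)]
            norm_num; ring
        _ ≤ 1024 * (3 * (8 + r ^ 2)) * (8 + r ^ 2) * (8 + r ^ 2) ^ 3 := by
            have h1 : (0:ℝ) ≤ 8 + r ^ 2 := (den_pos r).le
            gcongr <;> positivity
        _ = 3072 * (8 + r ^ 2) ^ 5 := by ring
    calc |1024 * (8 - 3 * r ^ 2) * (8 - r ^ 2) * r ^ 3|
        = (|1024 * (8 - 3 * r ^ 2) * (8 - r ^ 2) * r ^ 3| * r ^ 3) / r ^ 3 := by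
          field_simp
      _ ≤ 3072 * (8 + r ^ 2) ^ 5 / r ^ 3 := by
          apply div_le_div_of_nonneg_right key (by positivity) |>.trans_eq rfl
      _ = 3072 * (r ^ 3)⁻¹ * (8 + r ^ 2) ^ 5 := by ring
  have hIf : IntegrableOn f (Ioi (0:ℝ)) := by
    have : Ioc (0:ℝ) 1 ∪ Ioi 1 = Ioi 0 := Ioc_union_Ioi_eq_Ioi zero_le_one
    rw [← this]
    exact hI1.union hI2
  -- fundamental theorem of calculus on Ioi 0
  have key : (∫ r in Ioi (0:ℝ), f r) = 32 - Fpoh 0 := by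
    refine integral_Ioi_of_hasDerivAt_of_tendsto ?_ (fun x _ => hasDerivAt_Fpoh x) hIf tendsto_Fpoh
    exact ((hasDerivAt_Fpoh 0).continuousAt).continuousWithinAt
  have hF0 : Fpoh 0 = 0 := by simp [Fpoh]
  have hint : (∫ r in Ioi (0:ℝ), Φ r * ΛQ r * r ^ 3) = 32 := by
    rw [show (fun r => Φ r * ΛQ r * r ^ 3) = f from funext hint_eq] at *
    rw [key, hF0]; ring
  refine ⟨?_, by rw [hint]; norm_num, hint⟩
  -- the limit
  have h2F : (fun y : ℝ => y ^ 4 * |ΛQ y| ^ 2) = fun y => 2 * Fpoh y := by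
    funext y
    rw [sq_abs, hΛQexp, Fpoh]
    have h0 : (8 + y ^ 2) ≠ 0 := (den_pos y).ne'
    field_simp
    ring
  rw [h2F]
  have h2 := tendsto_Fpoh.const_mul (2:ℝ)
  have he : (2:ℝ) * 32 = 64 := by norm_num
  rw [he] at h2
  exact h2
end

section
/- Let N = 4. There exists C > 0 such that for every R > 2 and every radial v ∈ H²(ℝ⁴): ∫_{|y| ≤ R} |v|²/(|y|⁴(1+|log|y||)²) ≤ C ( ∫_{|y| ≤ R} |∂_y v|²/|y|² + ∫_{|y| ≤ 2} |v|² ). -/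
open Real MeasureTheory Set
open intervalIntegral Filter

lemma ptwise (s V D x c : ℝ) (hx : 0 < x) (hc : 1 ≤ c) (hs : s = 1 ∨ s = -1) :
    s * (2 * V * D * c⁻¹) ≤ 1/2 * (V ^ 2 * (x⁻¹ * c⁻¹ ^ 2)) + 2 * (D ^ 2 * x) := by
  have hc0 : (0:ℝ) < c := lt_of_lt_of_le one_pos hc
  rw [← sub_nonneg]
  rcases hs with h | h <;> subst h
  · have : 1/2 * (V ^ 2 * (x⁻¹ * c⁻¹ ^ 2)) + 2 * (D ^ 2 * x) - 1 * (2 * V * D * c⁻¹)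
        = (V / (x * c) - 2 * D) ^ 2 * (x / 2) := by
      field_simp; ring
    rw [this]; positivity
  · have : 1/2 * (V ^ 2 * (x⁻¹ * c⁻¹ ^ 2)) + 2 * (D ^ 2 * x) - (-1) * (2 * V * D * c⁻¹)
        = (V / (x * c) + 2 * D) ^ 2 * (x / 2) := by
      field_simp; ring
    rw [this]; positivity

lemma core (v : ℝ → ℝ) (hv : ContDiff ℝ 2 v) {c : ℝ → ℝ} {s a b : ℝ}
    (hs : s = 1 ∨ s = -1) (ha : 0 < a) (hab : a ≤ b)
    (hc : ∀ x ∈ Icc a b, HasDerivAt c (s * x⁻¹) x)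
    (hc1 : ∀ x ∈ Icc a b, 1 ≤ c x) :
    ∫ x in a..b, v x ^ 2 * (x⁻¹ * (c x)⁻¹ ^ 2)
      ≤ 2 * ((-s) * (v b ^ 2 * (c b)⁻¹) - (-s) * (v a ^ 2 * (c a)⁻¹))
        + 4 * ∫ x in a..b, deriv v x ^ 2 * x := by
  have hvd : Differentiable ℝ v := hv.differentiable two_ne_zero
  have hv' : Continuous (deriv v) := hv.continuous_deriv one_le_two
  have hccont : ContinuousOn c (Icc a b) := fun x hx =>
    (hc x hx).continuousAt.continuousWithinAt
  have hcne : ∀ x ∈ Icc a b, c x ≠ 0 := fun x hx => by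
    have := hc1 x hx; intro h; rw [h] at this; linarith
  have hxne : ∀ x ∈ Icc a b, x ≠ 0 := fun x hx => ne_of_gt (lt_of_lt_of_le ha hx.1)
  set F : ℝ → ℝ := fun x => (-s) * (v x ^ 2 * (c x)⁻¹) with hF
  have hder : ∀ x ∈ Icc a b, HasDerivAt F
      ((-s) * (2 * v x * deriv v x * (c x)⁻¹) + v x ^ 2 * (x⁻¹ * (c x)⁻¹ ^ 2)) x := by
    intro x hx
    have h1 : HasDerivAt (fun y => v y ^ 2) (2 * v x * deriv v x) x := by
      simpa [mul_comm, mul_assoc] using ((hvd x).hasDerivAt.fun_pow 2)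
    have h2 : HasDerivAt (fun y => (c y)⁻¹) (-(s * x⁻¹) / c x ^ 2) x :=
      (hc x hx).inv (hcne x hx)
    have h3 := (h1.mul h2).const_mul (-s)
    have heq : (-s) * (2 * v x * deriv v x * (c x)⁻¹) + v x ^ 2 * (x⁻¹ * (c x)⁻¹ ^ 2)
        = (-s) * (2 * v x * deriv v x * (c x)⁻¹ + v x ^ 2 * (-(s * x⁻¹) / c x ^ 2)) := by
      rcases hs with h | h <;> subst h <;> field_simp [hcne x hx, hxne x hx] <;> ring
    rw [heq]
    exact h3
  have hT2cont : ContinuousOn (fun x => v x ^ 2 * (x⁻¹ * (c x)⁻¹ ^ 2)) (Icc a b) := by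
    apply ContinuousOn.mul (hv.continuous.continuousOn.pow 2)
    exact (continuousOn_id.inv₀ hxne).mul ((hccont.inv₀ hcne).pow 2)
  have hT1cont : ContinuousOn (fun x => 2 * v x * deriv v x * (c x)⁻¹) (Icc a b) := by
    apply ContinuousOn.mul _ (hccont.inv₀ hcne)
    exact ((continuous_const.mul hv.continuous).mul hv').continuousOn
  have hqcont : Continuous (fun x => deriv v x ^ 2 * x) := (hv'.pow 2).mul continuous_id
  have huIcc : uIcc a b = Icc a b := uIcc_of_le hab
  have hint2 : IntervalIntegrable (fun x => v x ^ 2 * (x⁻¹ * (c x)⁻¹ ^ 2)) volume a b := by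
    apply ContinuousOn.intervalIntegrable; rwa [huIcc]
  have hint1 : IntervalIntegrable (fun x => 2 * v x * deriv v x * (c x)⁻¹) volume a b := by
    apply ContinuousOn.intervalIntegrable; rwa [huIcc]
  have hintq : IntervalIntegrable (fun x => deriv v x ^ 2 * x) volume a b :=
    hqcont.intervalIntegrable a b
  have hint1s : IntervalIntegrable (fun x => s * (2 * v x * deriv v x * (c x)⁻¹)) volume a b :=
    hint1.const_mul s
  have hint1ns : IntervalIntegrable (fun x => (-s) * (2 * v x * deriv v x * (c x)⁻¹)) volume a b :=
    hint1.const_mul (-s)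
  have hFTC : ∫ x in a..b, ((-s) * (2 * v x * deriv v x * (c x)⁻¹)
      + v x ^ 2 * (x⁻¹ * (c x)⁻¹ ^ 2)) = F b - F a :=
    integral_eq_sub_of_hasDerivAt (fun x hx => hder x (by rwa [huIcc] at hx))
      (hint1ns.add hint2)
  have hsplit : ∫ x in a..b, ((-s) * (2 * v x * deriv v x * (c x)⁻¹)
      + v x ^ 2 * (x⁻¹ * (c x)⁻¹ ^ 2))
      = (∫ x in a..b, (-s) * (2 * v x * deriv v x * (c x)⁻¹))
        + ∫ x in a..b, v x ^ 2 * (x⁻¹ * (c x)⁻¹ ^ 2) :=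
    integral_add hint1ns hint2
  have h5 : (∫ x in a..b, (-s) * (2 * v x * deriv v x * (c x)⁻¹))
      = -∫ x in a..b, s * (2 * v x * deriv v x * (c x)⁻¹) := by
    rw [← intervalIntegral.integral_neg]
    apply intervalIntegral.integral_congr
    intro x _; ring
  have hmono : (∫ x in a..b, s * (2 * v x * deriv v x * (c x)⁻¹))
      ≤ ∫ x in a..b, (1/2 * (v x ^ 2 * (x⁻¹ * (c x)⁻¹ ^ 2)) + 2 * (deriv v x ^ 2 * x)) := by
    apply integral_mono_on hab hint1s ((hint2.const_mul _).add (hintq.const_mul _))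
    intro x hx
    exact ptwise s (v x) (deriv v x) x (c x) (lt_of_lt_of_le ha hx.1) (hc1 x hx) hs
  have hrhs : (∫ x in a..b, (1/2 * (v x ^ 2 * (x⁻¹ * (c x)⁻¹ ^ 2)) + 2 * (deriv v x ^ 2 * x)))
      = 1/2 * (∫ x in a..b, v x ^ 2 * (x⁻¹ * (c x)⁻¹ ^ 2))
        + 2 * ∫ x in a..b, deriv v x ^ 2 * x := by
    rw [integral_add (hint2.const_mul _) (hintq.const_mul _),
      intervalIntegral.integral_const_mul, intervalIntegral.integral_const_mul]
  have hFb : F b = (-s) * (v b ^ 2 * (c b)⁻¹) := rfl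
  have hFa : F a = (-s) * (v a ^ 2 * (c a)⁻¹) := rfl
  rw [hsplit, h5] at hFTC
  rw [hrhs] at hmono
  linarith

lemma Wint : IntegrableOn (fun x : ℝ => x⁻¹ * ((1 - Real.log x)⁻¹) ^ 2) (Ioc (0:ℝ) 1) volume := by
  set W : ℝ → ℝ := fun x => if x = 0 then 0 else (1 - Real.log x)⁻¹ with hW
  have hne : ∀ x : ℝ, 0 < x → x ≤ 1 → (1 - Real.log x) ≠ 0 := by
    intro x hx0 hx1
    have := Real.log_nonpos hx0.le hx1
    intro h; linarith
  apply intervalIntegral.integrableOn_deriv_of_nonneg (g := W)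
  · -- continuity on Icc 0 1
    intro x hx
    rcases eq_or_ne x 0 with h0 | h0
    · subst h0
      have h1 : Tendsto (fun x : ℝ => 1 - Real.log x) (nhdsWithin 0 (Ioi 0)) atTop := by
        have hlog : Tendsto Real.log (nhdsWithin (0:ℝ) (Ioi 0)) atBot :=
          Real.tendsto_log_nhdsGT_zero
        have := tendsto_neg_atBot_atTop.comp hlog
        have h2 := tendsto_atTop_add_const_left _ (1:ℝ) this
        simpa [sub_eq_add_neg, Function.comp] using h2
      have h2 : Tendsto W (nhdsWithin (0:ℝ) (Ioi 0)) (nhds 0) := by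
        apply Tendsto.congr' _ h1.inv_tendsto_atTop
        filter_upwards [self_mem_nhdsWithin] with y hy
        simp [hW, ne_of_gt (mem_Ioi.mp hy)]
      have hWzero : W 0 = 0 := by simp [hW]
      unfold ContinuousWithinAt
      rw [hWzero]
      apply Tendsto.mono_left _ (nhdsWithin_mono 0 (Icc_subset_Ici_self))
      rw [← Set.Ioi_insert, nhdsWithin_insert]
      rw [Filter.tendsto_sup]
      exact ⟨by simpa [hWzero] using tendsto_pure_nhds W 0, h2⟩
    · have hx0 : 0 < x := lt_of_le_of_ne hx.1 (Ne.symm h0)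
      have hc : ContinuousAt (fun y : ℝ => (1 - Real.log y)⁻¹) x := by
        apply ContinuousAt.inv₀
        · exact (continuous_const.continuousAt).sub (Real.continuousAt_log h0)
        · exact hne x hx0 hx.2
      apply (hc.congr _).continuousWithinAt
      filter_upwards [eventually_ne_nhds h0] with y hy
      simp [hW, hy]
  · -- derivative
    intro x hx
    have hx0 : 0 < x := hx.1
    have hder : HasDerivAt (fun y : ℝ => (1 - Real.log y)⁻¹)
        (x⁻¹ * ((1 - Real.log x)⁻¹) ^ 2) x := by
      have h1 : HasDerivAt (fun y : ℝ => 1 - Real.log y) (-x⁻¹) x :=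
        (Real.hasDerivAt_log (ne_of_gt hx0)).const_sub 1
      have h2 : HasDerivAt (fun y : ℝ => (1 - Real.log y)⁻¹) _ x := h1.fun_inv (hne x hx0 hx.2.le)
      convert h2 using 1
      rw [neg_neg, div_eq_mul_inv, inv_pow]
    apply hder.congr_of_eventuallyEq
    filter_upwards [eventually_ne_nhds (ne_of_gt hx0)] with y hy
    simp [hW, hy]
  · intro x hx
    have : (0:ℝ) < x := hx.1
    positivity

lemma g1int (v : ℝ → ℝ) (hv : Continuous v) :
    IntegrableOn (fun x => v x ^ 2 * (x⁻¹ * ((1 - Real.log x)⁻¹) ^ 2)) (Ioc (0:ℝ) 1) volume := by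
  obtain ⟨M, hM⟩ := (isCompact_Icc (a := (0:ℝ)) (b := 1)).exists_bound_of_continuousOn
    hv.continuousOn
  have hne : ∀ x : ℝ, 0 < x → x ≤ 1 → (1 - Real.log x) ≠ 0 := by
    intro x hx0 hx1
    have := Real.log_nonpos hx0.le hx1
    intro h; linarith
  apply Integrable.mono (Wint.const_mul (M ^ 2))
  · -- measurability
    apply ContinuousOn.aestronglyMeasurable _ measurableSet_Ioc
    apply ContinuousOn.mul (hv.continuousOn.pow 2)
    apply ContinuousOn.mul
    · exact continuousOn_id.inv₀ fun x hx => ne_of_gt hx.1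
    · apply ContinuousOn.pow
      apply ContinuousOn.inv₀
      · exact continuousOn_const.sub (Real.continuousOn_log.mono fun x hx => ne_of_gt hx.1)
      · exact fun x hx => hne x hx.1 hx.2
  · rw [ae_restrict_iff' measurableSet_Ioc]
    apply ae_of_all
    intro x hx
    have hx0 : 0 < x := hx.1
    have hMx : |v x| ≤ M := hM x ⟨hx0.le, hx.2⟩
    have hM0 : 0 ≤ M := le_trans (abs_nonneg _) hMx
    have hWpos : 0 ≤ x⁻¹ * ((1 - Real.log x)⁻¹) ^ 2 := by positivity
    rw [Real.norm_eq_abs, Real.norm_eq_abs]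
    rw [abs_of_nonneg (by positivity), abs_of_nonneg (by positivity)]
    apply mul_le_mul_of_nonneg_right _ hWpos
    calc v x ^ 2 = |v x| ^ 2 := (sq_abs _).symm
      _ ≤ M ^ 2 := by nlinarith [abs_nonneg (v x)]

lemma piece1 (v : ℝ → ℝ) (hv : ContDiff ℝ 2 v) :
    (∫ x in Ioc (0:ℝ) 1, v x ^ 2 * (x⁻¹ * ((1 - Real.log x)⁻¹) ^ 2))
      ≤ 2 * v 1 ^ 2 + 4 * ∫ x in Ioc (0:ℝ) 1, deriv v x ^ 2 * x := by
  have hv' : Continuous (deriv v) := hv.continuous_deriv one_le_two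
  have hq_int : IntegrableOn (fun x => deriv v x ^ 2 * x) (Ioc (0:ℝ) 1) volume :=
    ((hv'.pow 2).mul continuous_id).integrableOn_Ioc
  have hq_nonneg : (0:ℝ → ℝ) ≤ᵐ[volume.restrict (Ioc (0:ℝ) 1)] fun x => deriv v x ^ 2 * x :=
    (ae_restrict_iff' measurableSet_Ioc).mpr
      (ae_of_all _ fun x hx => by have := hx.1; positivity)
  set sets : ℕ → Set ℝ := fun n => Ioc ((n:ℝ) + 1)⁻¹ 1 with hsets
  have hU : (⋃ n, sets n) = Ioc (0:ℝ) 1 := by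
    ext x
    simp only [hsets, mem_iUnion, mem_Ioc]
    constructor
    · rintro ⟨n, h1, h2⟩
      refine ⟨lt_trans (by positivity) h1, h2⟩
    · rintro ⟨hx0, hx1⟩
      obtain ⟨n, hn⟩ := exists_nat_gt x⁻¹
      refine ⟨n, ?_, hx1⟩
      have hn1 : (0:ℝ) < (n:ℝ) + 1 := by positivity
      rw [inv_eq_one_div, div_lt_iff₀ hn1]
      have hxinv : x * x⁻¹ = 1 := mul_inv_cancel₀ (ne_of_gt hx0)
      nlinarith
  have hmono : Monotone sets := by
    intro m n hmn
    apply Ioc_subset_Ioc_left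
    apply inv_anti₀ (by positivity)
    have : (m:ℝ) ≤ (n:ℝ) := Nat.cast_le.mpr hmn
    linarith
  have hginto : IntegrableOn (fun x => v x ^ 2 * (x⁻¹ * ((1 - Real.log x)⁻¹) ^ 2))
      (⋃ n, sets n) volume := by rw [hU]; exact g1int v hv.continuous
  have htend := tendsto_setIntegral_of_monotone (fun n => measurableSet_Ioc) hmono hginto
  rw [hU] at htend
  apply le_of_tendsto htend
  apply Filter.Eventually.of_forall
  intro n
  have hε0 : (0:ℝ) < ((n:ℝ) + 1)⁻¹ := by positivity
  have hε1 : ((n:ℝ) + 1)⁻¹ ≤ 1 := by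
    rw [inv_le_one_iff₀]; right; linarith [(Nat.cast_nonneg n : (0:ℝ) ≤ (n:ℝ))]
  set ε : ℝ := ((n:ℝ) + 1)⁻¹
  have hc : ∀ x ∈ Icc ε 1, HasDerivAt (fun y => 1 - Real.log y) ((-1) * x⁻¹) x := by
    intro x hx
    have hx0 : 0 < x := lt_of_lt_of_le hε0 hx.1
    have := (Real.hasDerivAt_log (ne_of_gt hx0)).const_sub 1
    simpa using this
  have hc1 : ∀ x ∈ Icc ε 1, 1 ≤ 1 - Real.log x := by
    intro x hx
    have hx0 : 0 < x := lt_of_lt_of_le hε0 hx.1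
    have := Real.log_nonpos hx0.le hx.2
    linarith
  have hcore := core v hv (Or.inr rfl) hε0 hε1 hc hc1
  have hqb : (∫ x in ε..1, deriv v x ^ 2 * x) ≤ ∫ x in Ioc (0:ℝ) 1, deriv v x ^ 2 * x := by
    rw [intervalIntegral.integral_of_le hε1]
    apply setIntegral_mono_set hq_int hq_nonneg
    exact HasSubset.Subset.eventuallyLE (Ioc_subset_Ioc_left hε0.le)
  have hεterm : 0 ≤ v ε ^ 2 * (1 - Real.log ε)⁻¹ := by
    have := hc1 ε ⟨le_rfl, hε1⟩
    positivity
  have h1 : (1:ℝ) - Real.log 1 = 1 := by simp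
  rw [← intervalIntegral.integral_of_le hε1]
  refine hcore.trans ?_
  rw [h1]
  norm_num
  linarith

lemma stepC (v : ℝ → ℝ) (hv : ContDiff ℝ 2 v) :
    v 1 ^ 2 ≤ 2 * (∫ x in Ioc (1:ℝ) 2, v x ^ 2 * x ^ 3)
      + ∫ x in Ioc (1:ℝ) 2, deriv v x ^ 2 * x := by
  have hvc := hv.continuous
  have hv' : Continuous (deriv v) := hv.continuous_deriv one_le_two
  have hvd : Differentiable ℝ v := hv.differentiable two_ne_zero
  set D : ℝ := ∫ x in (1:ℝ)..2, |2 * v x * deriv v x| with hD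
  have hvvcont : Continuous (fun x => 2 * v x * deriv v x) :=
    (continuous_const.mul hvc).mul hv'
  have key : ∀ s ∈ Ioc (1:ℝ) 2, v 1 ^ 2 ≤ v s ^ 2 + D := by
    intro s hs
    have hFTC : (∫ x in (1:ℝ)..s, 2 * v x * deriv v x) = v s ^ 2 - v 1 ^ 2 := by
      apply intervalIntegral.integral_eq_sub_of_hasDerivAt (f := fun y => v y ^ 2)
      · intro x hx
        simpa [mul_comm, mul_assoc] using ((hvd x).hasDerivAt.fun_pow 2)
      · exact hvvcont.intervalIntegrable _ _
    have h2 : |∫ x in (1:ℝ)..s, 2 * v x * deriv v x|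
        ≤ ∫ x in (1:ℝ)..s, |2 * v x * deriv v x| :=
      intervalIntegral.abs_integral_le_integral_abs hs.1.le
    have h3 : (∫ x in (1:ℝ)..s, |2 * v x * deriv v x|) ≤ D := by
      apply intervalIntegral.integral_mono_interval le_rfl hs.1.le hs.2
      · exact ae_of_all _ fun x => abs_nonneg _
      · exact hvvcont.abs.intervalIntegrable _ _
    have h4 := neg_le_of_abs_le (h2.trans h3)
    linarith
  have hμ : (volume (Ioc (1:ℝ) 2)).toReal = 1 := by
    rw [Real.volume_Ioc]; norm_num
  have h4 : v 1 ^ 2 = ∫ _s in Ioc (1:ℝ) 2, (v 1 ^ 2 : ℝ) := by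
    rw [setIntegral_const, measureReal_def, hμ]; simp
  have hconst_int : IntegrableOn (fun _ : ℝ => v 1 ^ 2) (Ioc (1:ℝ) 2) volume := by
    apply (integrableOn_const_iff).mpr; right; rw [Real.volume_Ioc]; norm_num
  have hDconst_int : IntegrableOn (fun _ : ℝ => D) (Ioc (1:ℝ) 2) volume := by
    apply (integrableOn_const_iff).mpr; right; rw [Real.volume_Ioc]; norm_num
  have hv2int : IntegrableOn (fun s => v s ^ 2) (Ioc (1:ℝ) 2) volume :=
    (hvc.pow 2).integrableOn_Ioc
  have h5 : (∫ _s in Ioc (1:ℝ) 2, (v 1 ^ 2 : ℝ)) ≤ ∫ s in Ioc (1:ℝ) 2, (v s ^ 2 + D) := by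
    apply setIntegral_mono_on hconst_int (hv2int.add hDconst_int) measurableSet_Ioc key
  have h6 : (∫ s in Ioc (1:ℝ) 2, (v s ^ 2 + D)) = (∫ s in Ioc (1:ℝ) 2, v s ^ 2) + D := by
    rw [integral_add hv2int hDconst_int, setIntegral_const, measureReal_def, hμ]; simp
  have hpint : IntegrableOn (fun x : ℝ => v x ^ 2 * x ^ 3) (Ioc (1:ℝ) 2) volume :=
    ((hvc.pow 2).mul (continuous_pow 3)).integrableOn_Ioc
  have hqint : IntegrableOn (fun x : ℝ => deriv v x ^ 2 * x) (Ioc (1:ℝ) 2) volume :=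
    ((hv'.pow 2).mul continuous_id).integrableOn_Ioc
  have h7 : (∫ s in Ioc (1:ℝ) 2, v s ^ 2) ≤ ∫ s in Ioc (1:ℝ) 2, v s ^ 2 * s ^ 3 := by
    apply setIntegral_mono_on hv2int hpint measurableSet_Ioc
    intro x hx
    have h1x : (1:ℝ) ≤ x := hx.1.le
    have hx3 : (1:ℝ) ≤ x ^ 3 := one_le_pow₀ h1x
    nlinarith [mul_le_mul_of_nonneg_left hx3 (sq_nonneg (v x))]
  have h8 : D ≤ (∫ x in Ioc (1:ℝ) 2, v x ^ 2 * x ^ 3) + ∫ x in Ioc (1:ℝ) 2, deriv v x ^ 2 * x := by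
    rw [hD, intervalIntegral.integral_of_le one_le_two]
    have hstep : (∫ x in Ioc (1:ℝ) 2, |2 * v x * deriv v x|)
        ≤ ∫ x in Ioc (1:ℝ) 2, (v x ^ 2 * x ^ 3 + deriv v x ^ 2 * x) := by
      apply setIntegral_mono_on (hvvcont.abs.integrableOn_Ioc)
        (hpint.add hqint) measurableSet_Ioc
      intro x hx
      have h1x : (1:ℝ) ≤ x := hx.1.le
      have hx3 : (1:ℝ) ≤ x ^ 3 := one_le_pow₀ h1x
      have hv3 : v x ^ 2 ≤ v x ^ 2 * x ^ 3 :=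
        by nlinarith [mul_le_mul_of_nonneg_left hx3 (sq_nonneg (v x))]
      have hd3 : deriv v x ^ 2 ≤ deriv v x ^ 2 * x :=
        by nlinarith [mul_le_mul_of_nonneg_left h1x (sq_nonneg (deriv v x))]
      simp only [Pi.add_apply]
      rcases abs_cases (2 * v x * deriv v x) with ⟨heq, _⟩ | ⟨heq, _⟩ <;> rw [heq] <;>
        nlinarith [sq_nonneg (v x - deriv v x), sq_nonneg (v x + deriv v x)]
    refine hstep.trans ?_
    rw [integral_add hpint hqint]
  linarith

lemma piece2 (v : ℝ → ℝ) (hv : ContDiff ℝ 2 v) {R : ℝ} (hR : 1 ≤ R) :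
    (∫ x in Ioc (1:ℝ) R, v x ^ 2 * (x⁻¹ * ((1 + Real.log x)⁻¹) ^ 2))
      ≤ 2 * v 1 ^ 2 + 4 * ∫ x in Ioc (1:ℝ) R, deriv v x ^ 2 * x := by
  have hc : ∀ x ∈ Icc (1:ℝ) R, HasDerivAt (fun y => 1 + Real.log y) (1 * x⁻¹) x := by
    intro x hx
    have hx0 : (0:ℝ) < x := lt_of_lt_of_le one_pos hx.1
    have := (Real.hasDerivAt_log (ne_of_gt hx0)).const_add 1
    simpa using this
  have hc1 : ∀ x ∈ Icc (1:ℝ) R, 1 ≤ 1 + Real.log x := by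
    intro x hx
    have := Real.log_nonneg hx.1
    linarith
  have hcore := core v hv (Or.inl rfl) one_pos hR hc hc1
  rw [← intervalIntegral.integral_of_le hR, ← intervalIntegral.integral_of_le hR]
  refine hcore.trans ?_
  have h1 : (1:ℝ) + Real.log 1 = 1 := by simp
  rw [h1]
  have hRterm : 0 ≤ v R ^ 2 * (1 + Real.log R)⁻¹ := by
    have := hc1 R ⟨hR, le_rfl⟩
    positivity
  norm_num
  linarith

/-- Logarithmic Hardy inequality in dimension `N = 4` (radial coordinates,
measure `r³ dr`): there is `C > 0` such that for every `R > 2` and every radial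
`v ∈ H²`,
`∫_{r ≤ R} v²/(r⁴(1+|log r|)²) ≤ C (∫_{r ≤ R} (v')²/r² + ∫_{r ≤ 2} v²)`. -/
theorem stmt_13 :
    ∃ C > 0, ∀ R : ℝ, 2 < R → ∀ v : ℝ → ℝ, ContDiff ℝ 2 v →
      (∫ r in Ioc (0:ℝ) R, (v r) ^ 2 / (r ^ 4 * (1 + |Real.log r|) ^ 2) * r ^ 3)
        ≤ C * ((∫ r in Ioc (0:ℝ) R, (deriv v r) ^ 2 / r ^ 2 * r ^ 3)
          + ∫ r in Ioc (0:ℝ) 2, (v r) ^ 2 * r ^ 3) := by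
  refine ⟨8, by norm_num, ?_⟩
  intro R hR v hv
  have hvc : Continuous v := hv.continuous
  have hv' : Continuous (deriv v) := hv.continuous_deriv one_le_two
  have h1R : (1:ℝ) ≤ R := by linarith
  -- abbreviations
  set L : ℝ → ℝ := fun r => (v r) ^ 2 / (r ^ 4 * (1 + |Real.log r|) ^ 2) * r ^ 3 with hLdef
  set q : ℝ → ℝ := fun x => deriv v x ^ 2 * x with hqdef
  have hq_cont : Continuous q := (hv'.pow 2).mul continuous_id
  -- rewrite RHS first integral
  have hRHS1 : (∫ r in Ioc (0:ℝ) R, (deriv v r) ^ 2 / r ^ 2 * r ^ 3)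
      = ∫ r in Ioc (0:ℝ) R, q r := by
    apply setIntegral_congr_fun measurableSet_Ioc
    intro r hr
    have hr0 : r ≠ 0 := ne_of_gt hr.1
    simp only [hqdef]
    field_simp
  -- equalities for L on the two pieces
  have hEq1 : EqOn L (fun x => v x ^ 2 * (x⁻¹ * ((1 - Real.log x)⁻¹) ^ 2)) (Ioc (0:ℝ) 1) := by
    intro r hr
    have hr0 : (0:ℝ) < r := hr.1
    have hlog : Real.log r ≤ 0 := Real.log_nonpos hr0.le hr.2
    have habs : |Real.log r| = -Real.log r := abs_of_nonpos hlog
    have hne : (1:ℝ) - Real.log r ≠ 0 := by intro h; linarith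
    simp only [hLdef, habs]
    rw [sub_eq_add_neg] at hne ⊢
    field_simp
  have hEq2 : EqOn L (fun x => v x ^ 2 * (x⁻¹ * ((1 + Real.log x)⁻¹) ^ 2)) (Ioc (1:ℝ) R) := by
    intro r hr
    have hr1 : (1:ℝ) < r := hr.1
    have hr0 : (0:ℝ) < r := lt_trans one_pos hr1
    have hlog : 0 ≤ Real.log r := Real.log_nonneg hr1.le
    have habs : |Real.log r| = Real.log r := abs_of_nonneg hlog
    have hne : (1:ℝ) + Real.log r ≠ 0 := by intro h; linarith
    simp only [hLdef, habs]
    field_simp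
  -- integrabilities
  have hLint1 : IntegrableOn L (Ioc (0:ℝ) 1) volume :=
    (g1int v hvc).congr_fun (fun x hx => (hEq1 hx).symm) measurableSet_Ioc
  have hLcont2 : ContinuousOn L (Icc (1:ℝ) R) := by
    apply ContinuousOn.mul _ (continuous_pow 3).continuousOn
    apply ContinuousOn.div (hvc.pow 2).continuousOn
    · apply ContinuousOn.mul (continuous_pow 4).continuousOn
      apply ContinuousOn.pow
      apply ContinuousOn.add continuousOn_const
      exact (Real.continuousOn_log.mono fun x hx => by
        simp only [mem_compl_iff, mem_singleton_iff]
        exact ne_of_gt (lt_of_lt_of_le one_pos hx.1)).abs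
    · intro x hx
      have hx0 : (0:ℝ) < x := lt_of_lt_of_le one_pos hx.1
      have : (0:ℝ) < 1 + |Real.log x| := by positivity
      positivity
  have hLint2 : IntegrableOn L (Ioc (1:ℝ) R) volume :=
    (hLcont2.integrableOn_compact isCompact_Icc).mono_set Ioc_subset_Icc_self
  have hqint : ∀ a b : ℝ, IntegrableOn q (Ioc a b) volume := fun a b =>
    hq_cont.integrableOn_Ioc
  -- splitting
  have hsplit : (∫ r in Ioc (0:ℝ) R, L r) = (∫ r in Ioc (0:ℝ) 1, L r) + ∫ r in Ioc (1:ℝ) R, L r := by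
    rw [← Ioc_union_Ioc_eq_Ioc (zero_le_one) h1R]
    exact setIntegral_union (Ioc_disjoint_Ioc_of_le le_rfl) measurableSet_Ioc hLint1 hLint2
  have hsplitq : (∫ r in Ioc (0:ℝ) R, q r) = (∫ r in Ioc (0:ℝ) 1, q r) + ∫ r in Ioc (1:ℝ) R, q r := by
    rw [← Ioc_union_Ioc_eq_Ioc (zero_le_one) h1R]
    exact setIntegral_union (Ioc_disjoint_Ioc_of_le le_rfl) measurableSet_Ioc (hqint 0 1) (hqint 1 R)
  -- bounds on the two pieces
  have hb1 : (∫ r in Ioc (0:ℝ) 1, L r) ≤ 2 * v 1 ^ 2 + 4 * ∫ x in Ioc (0:ℝ) 1, q x := by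
    rw [setIntegral_congr_fun measurableSet_Ioc hEq1]
    exact piece1 v hv
  have hb2 : (∫ r in Ioc (1:ℝ) R, L r) ≤ 2 * v 1 ^ 2 + 4 * ∫ x in Ioc (1:ℝ) R, q x := by
    rw [setIntegral_congr_fun measurableSet_Ioc hEq2]
    exact piece2 v hv h1R
  -- step C and monotonicity of the RHS integrals
  have hq_nonnegR : (0:ℝ → ℝ) ≤ᵐ[volume.restrict (Ioc (0:ℝ) R)] q :=
    (ae_restrict_iff' measurableSet_Ioc).mpr
      (ae_of_all _ fun x hx => by have := hx.1; simp only [hqdef]; positivity)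
  have hq12 : (∫ x in Ioc (1:ℝ) 2, q x) ≤ ∫ x in Ioc (0:ℝ) R, q x := by
    apply setIntegral_mono_set (hqint 0 R) hq_nonnegR
    exact HasSubset.Subset.eventuallyLE (Ioc_subset_Ioc zero_le_one hR.le)
  have hp_int : IntegrableOn (fun x : ℝ => v x ^ 2 * x ^ 3) (Ioc (0:ℝ) 2) volume :=
    ((hvc.pow 2).mul (continuous_pow 3)).integrableOn_Ioc
  have hp_nonneg : (0:ℝ → ℝ) ≤ᵐ[volume.restrict (Ioc (0:ℝ) 2)] fun x => v x ^ 2 * x ^ 3 :=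
    (ae_restrict_iff' measurableSet_Ioc).mpr
      (ae_of_all _ fun x hx => by have := hx.1; positivity)
  have hp12 : (∫ x in Ioc (1:ℝ) 2, v x ^ 2 * x ^ 3) ≤ ∫ x in Ioc (0:ℝ) 2, v x ^ 2 * x ^ 3 := by
    apply setIntegral_mono_set hp_int hp_nonneg
    exact HasSubset.Subset.eventuallyLE (Ioc_subset_Ioc_left zero_le_one)
  have hC := stepC v hv
  have hv1 : v 1 ^ 2 ≤ 2 * (∫ x in Ioc (0:ℝ) 2, v x ^ 2 * x ^ 3) + ∫ x in Ioc (0:ℝ) R, q x := by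
    refine hC.trans ?_
    have := hq12
    linarith
  -- nonnegativity of Q pieces
  have hq01 : (0:ℝ) ≤ ∫ x in Ioc (0:ℝ) 1, q x :=
    setIntegral_nonneg measurableSet_Ioc fun x hx => by
      have := hx.1; simp only [hqdef]; positivity
  have hq1R : (0:ℝ) ≤ ∫ x in Ioc (1:ℝ) R, q x :=
    setIntegral_nonneg measurableSet_Ioc fun x hx => by
      have : (0:ℝ) < x := lt_trans one_pos hx.1; simp only [hqdef]; positivity
  rw [hRHS1, hsplit]
  have hQ : (∫ x in Ioc (0:ℝ) 1, q x) + (∫ x in Ioc (1:ℝ) R, q x) = ∫ x in Ioc (0:ℝ) R, q x :=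
    hsplitq.symm
  linarith
end

section
/- Let 0 < α < 1 and let b, λ : [0, S) → (0, ∞) be C¹ functions satisfying λ_s = -bλ and |b_s| ≤ ((1-α)/10) b², with b(s) ≤ 1/2 for all s. Then the function s ↦ b(s)⁴ / ((log b(s))² λ(s)^{2(1-α)}) is nondecreasing on [0, S). -/
open Real Set

lemma key_nonneg (B β ℓ c : ℝ) (hB : 0 < B) (hℓ : ℓ ≤ -Real.log 2)
    (hβ : |β| ≤ c / 20 * B ^ 2) (hc : 0 < c) :
    0 ≤ 4 * β * ℓ ^ 2 - 2 * ℓ * β + c * B ^ 2 * ℓ ^ 2 := by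
  have hlog : (0.6931471803 : ℝ) < Real.log 2 := Real.log_two_gt_d9
  obtain ⟨h1, h2⟩ := abs_le.mp hβ
  have hB2 : 0 < B ^ 2 := by positivity
  nlinarith [mul_pos hc hB2, sq_nonneg ℓ, sq_nonneg (ℓ + 1),
    mul_nonneg (mul_pos hc hB2).le (sq_nonneg ℓ),
    mul_le_mul_of_nonneg_right h2 (sq_nonneg ℓ),
    mul_le_mul_of_nonneg_right (neg_le.mp (by linarith : -(c/20*B^2) ≤ β)) (sq_nonneg ℓ)]

/-- If `0 < α < 1` and `b, λ : [0,S) → (0,∞)` are `C¹` with `λ_s = -bλ`,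
`|b_s| ≤ ((1-α)/10) b²` and `b ≤ 1/2`, then
`s ↦ b⁴/((log b)² λ^{2(1-α)})` is nondecreasing on `[0,S)`. -/
theorem stmt_16 (α S : ℝ) (hα : 0 < α) (hα1 : α < 1)
    (b lam b' : ℝ → ℝ)
    (hbpos : ∀ s ∈ Ico (0:ℝ) S, 0 < b s)
    (hbsmall : ∀ s ∈ Ico (0:ℝ) S, b s ≤ 1 / 2)
    (hlampos : ∀ s ∈ Ico (0:ℝ) S, 0 < lam s)
    (hlam : ∀ s ∈ Ico (0:ℝ) S, HasDerivAt lam (-(b s * lam s)) s)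
    (hb : ∀ s ∈ Ico (0:ℝ) S, HasDerivAt b (b' s) s)
    (hbs : ∀ s ∈ Ico (0:ℝ) S, |b' s| ≤ (1 - α) / 10 * (b s) ^ 2) :
    MonotoneOn
      (fun s => (b s) ^ 4 / ((Real.log (b s)) ^ 2 * (lam s) ^ (2 * (1 - α))))
      (Ico (0:ℝ) S) := by
  set c : ℝ := 2 * (1 - α) with hc_def
  have hc : 0 < c := by simp only [hc_def]; linarith
  -- derivative formula at each point of the Ico
  have hder : ∀ x ∈ Ico (0:ℝ) S,
      HasDerivAt (fun s => (b s) ^ 4 / ((Real.log (b s)) ^ 2 * (lam s) ^ c))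
        (((4:ℕ) * b x ^ 3 * b' x * ((Real.log (b x)) ^ 2 * (lam x) ^ c)
          - b x ^ 4 * (((2:ℕ) * Real.log (b x) ^ 1 * (b' x / b x)) * (lam x) ^ c
            + (Real.log (b x)) ^ 2 * (-(b x * lam x) * c * lam x ^ (c - 1))))
          / ((Real.log (b x)) ^ 2 * (lam x) ^ c) ^ 2) x := by
    intro x hx
    have hBx := hbpos x hx
    have hLx := hlampos x hx
    have hℓx : Real.log (b x) ≤ -Real.log 2 := by
      calc Real.log (b x) ≤ Real.log (1/2) := Real.log_le_log hBx (hbsmall x hx)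
        _ = -Real.log 2 := by rw [one_div, Real.log_inv]
    have hℓne : Real.log (b x) ≠ 0 := by
      have : Real.log (b x) < 0 := lt_of_le_of_lt hℓx (neg_lt_zero.mpr (Real.log_pos one_lt_two))
      exact this.ne
    have h1 : HasDerivAt (fun s => (b s) ^ 4) ((4:ℕ) * b x ^ 3 * b' x) x := by
      simpa using (hb x hx).fun_pow 4
    have h2 : HasDerivAt (fun s => Real.log (b s)) (b' x / b x) x :=
      (hb x hx).log hBx.ne'
    have h3 : HasDerivAt (fun s => (Real.log (b s)) ^ 2)
        ((2:ℕ) * Real.log (b x) ^ 1 * (b' x / b x)) x := h2.pow 2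
    have h4 : HasDerivAt (fun s => (lam s) ^ c)
        (-(b x * lam x) * c * lam x ^ (c - 1)) x :=
      (hlam x hx).rpow_const (Or.inl hLx.ne')
    have h5 := h3.mul h4
    have hDne : (Real.log (b x)) ^ 2 * (lam x) ^ c ≠ 0 := by
      have : (0:ℝ) < lam x ^ c := Real.rpow_pos_of_pos hLx c
      positivity
    exact h1.div h5 hDne
  apply monotoneOn_of_deriv_nonneg (convex_Ico 0 S)
  · exact fun x hx => (hder x hx).continuousAt.continuousWithinAt
  · intro x hx
    rw [interior_Ico] at hx
    exact ((hder x (Ioo_subset_Ico_self hx)).differentiableAt).differentiableWithinAt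
  · intro x hx
    rw [interior_Ico] at hx
    have hx' := Ioo_subset_Ico_self hx
    rw [(hder x hx').deriv]
    have hBx := hbpos x hx'
    have hLx := hlampos x hx'
    have hP : (0:ℝ) < lam x ^ c := Real.rpow_pos_of_pos hLx c
    have hℓx : Real.log (b x) ≤ -Real.log 2 := by
      calc Real.log (b x) ≤ Real.log (1/2) := Real.log_le_log hBx (hbsmall x hx')
        _ = -Real.log 2 := by rw [one_div, Real.log_inv]
    have hℓne : Real.log (b x) ≠ 0 := by
      have : Real.log (b x) < 0 := lt_of_le_of_lt hℓx (neg_lt_zero.mpr (Real.log_pos one_lt_two))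
      exact this.ne
    have hrw : lam x ^ (c - 1) = lam x ^ c / lam x := Real.rpow_sub_one hLx.ne' c
    rw [hrw]
    set ℓ := Real.log (b x)
    set B := b x
    set L := lam x
    set P := L ^ c
    set β := b' x
    have hkey : 0 ≤ 4 * β * ℓ ^ 2 - 2 * ℓ * β + c * B ^ 2 * ℓ ^ 2 :=
      key_nonneg B β ℓ c hBx hℓx (by
        have := hbs x hx'
        calc |β| ≤ (1 - α) / 10 * B ^ 2 := this
          _ = c / 20 * B ^ 2 := by rw [hc_def]; ring) hc
    have heq : ((4:ℕ) * B ^ 3 * β * (ℓ ^ 2 * P)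
          - B ^ 4 * (((2:ℕ) * ℓ ^ 1 * (β / B)) * P + ℓ ^ 2 * (-(B * L) * c * (P / L))))
        = B ^ 3 * (4 * β * ℓ ^ 2 - 2 * ℓ * β + c * B ^ 2 * ℓ ^ 2) * P := by
      field_simp
      ring
    rw [heq]
    have hden : (0:ℝ) < (ℓ ^ 2 * P) ^ 2 := by positivity
    positivity
end
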